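/- Let m ≥ 2. Let U be a complex Hadamard matrix of order 4m−1 obtained from the incidence matrix of a symmetric 2-(4m−1, 2m−1, m−1) design by replacing every 0 entry with a = −1 + 1/(2m) + ε·i·√(4m−1)/(2m) for some ε ∈ {1,−1}, and let V be a complex Hadamard matrix of order 4m−1 obtained from a normalized symmetric real Hadamard matrix H of order 4m by discarding the first row and column, replacing the off-diagonal −1s with b = −1 + 1/(2m−2) + δ·i·√(4m−5)/(2m−2) for some δ ∈ {1,−1}, replacing the diagonal 1s with −b, and leaving all other entries unchanged. Then U and V are not equivalent. -/

import Mathlib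

open Matrix

section Aux

lemma equiv_entry {n : Type*} [Fintype n] [DecidableEq n] (σ τ : Equiv.Perm n)
    (d₁ d₂ : n → ℂ) (K : Matrix n n ℂ) (i j : n) :
    (σ.permMatrix ℂ * Matrix.diagonal d₁ * K * Matrix.diagonal d₂ * τ.permMatrix ℂ) i j
      = d₁ (σ i) * K (σ i) (τ.symm j) * d₂ (τ.symm j) := by
  have h1 : σ.permMatrix ℂ * Matrix.diagonal d₁ * K * Matrix.diagonal d₂ * τ.permMatrix ℂ
      = (σ.permMatrix ℂ * (Matrix.diagonal d₁ * K * Matrix.diagonal d₂)) * τ.permMatrix ℂ := by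
    simp only [Matrix.mul_assoc]
  rw [h1, Equiv.Perm.permMatrix, Equiv.Perm.permMatrix, PEquiv.mul_toMatrix_toPEquiv,
    PEquiv.toMatrix_toPEquiv_mul]
  simp [Matrix.submatrix_apply, Matrix.diagonal_mul, Matrix.mul_diagonal]

lemma prod16 (a : ℂ) (h : a * (starRingEnd ℂ) a = 1) (t1 t2 t3 t4 : ℂ)
    (h1 : t1 = 1 ∨ t1 = a) (h2 : t2 = 1 ∨ t2 = (starRingEnd ℂ) a)
    (h3 : t3 = 1 ∨ t3 = a) (h4 : t4 = 1 ∨ t4 = (starRingEnd ℂ) a) :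
    t1 * t2 * t3 * t4 = 1 ∨ t1 * t2 * t3 * t4 = a ∨ t1 * t2 * t3 * t4 = (starRingEnd ℂ) a
      ∨ t1 * t2 * t3 * t4 = a ^ 2 ∨ t1 * t2 * t3 * t4 = ((starRingEnd ℂ) a) ^ 2 := by
  rcases h1 with h1 | h1 <;> rcases h2 with h2 | h2 <;> rcases h3 with h3 | h3 <;>
    rcases h4 with h4 | h4 <;> rw [h1, h2, h3, h4] <;>
    first
      | (left; linear_combination (a * (starRingEnd ℂ) a + 1) * h)
      | (left; linear_combination h)
      | (left; ring1)
      | (right; left; linear_combination a * h)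
      | (right; left; ring1)
      | (right; right; left; linear_combination (starRingEnd ℂ) a * h)
      | (right; right; left; ring1)
      | (right; right; right; left; ring1)
      | (right; right; right; right; ring1)

set_option maxHeartbeats 1000000 in
lemma core20 (M : ℝ) (hM : 2 ≤ M) (a b z w : ℂ)
    (hare : a.re = -1 + 1/(2*M)) (hia : a.im^2 = 1 - a.re^2)
    (hbre : b.re = -1 + 1/(2*M-2)) (hib : b.im^2 = 1 - b.re^2)
    (hz : z = b ∨ z = (starRingEnd ℂ) b ∨ z = b^2 ∨ z = ((starRingEnd ℂ) b)^2)
    (hw : w = 1 ∨ w = a ∨ w = (starRingEnd ℂ) a ∨ w = a^2 ∨ w = ((starRingEnd ℂ) a)^2) :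
    z ≠ w := by
  have hM0 : (0:ℝ) < 2*M := by linarith
  have hM2 : (0:ℝ) < 2*M - 2 := by linarith
  have hx1 : -1 < a.re := by
    rw [hare]; have : 0 < 1/(2*M) := by positivity
    linarith
  have hx2 : a.re ≤ -3/4 := by
    rw [hare]
    have : 1/(2*M) ≤ 1/4 := by
      rw [div_le_div_iff₀ hM0 (by norm_num)]; linarith
    linarith
  have hy1 : -1 < b.re := by
    rw [hbre]; have : 0 < 1/(2*M-2) := by positivity
    linarith
  have hy2 : b.re ≤ -1/2 := by
    rw [hbre]
    have : 1/(2*M-2) ≤ 1/2 := by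
      rw [div_le_div_iff₀ hM2 (by norm_num)]; linarith
    linarith
  have hxy : a.re < b.re := by
    rw [hare, hbre]
    have : 1/(2*M) < 1/(2*M-2) := by
      rw [div_lt_div_iff₀ hM0 hM2]; linarith
    linarith
  have hia' : a.im * a.im = 1 - a.re * a.re := by nlinarith [hia]
  have hib' : b.im * b.im = 1 - b.re * b.re := by nlinarith [hib]
  clear hia hib hare hbre hM0 hM2
  intro h
  rcases hz with hzc | hzc | hzc | hzc <;> rcases hw with hwc | hwc | hwc | hwc | hwc <;>
    rw [hzc, hwc] at h <;> have h' := congrArg Complex.re h <;>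
    simp -failIfUnchanged only [pow_two, Complex.mul_re, Complex.conj_re, Complex.conj_im, Complex.one_re,
      neg_mul, mul_neg, neg_neg, sub_neg_eq_add] at h' <;>
    nlinarith [hx1, hx2, hy1, hy2, hxy, hia', hib', h']

lemma row_has (m : ℕ) (hm : 2 ≤ m) [NeZero (4*m)] (H : Matrix (Fin (4*m)) (Fin (4*m)) ℝ)
    (hent : ∀ i j, H i j = 1 ∨ H i j = -1)
    (horth : H * H.transpose = ((4*m : ℕ) : ℝ) • 1)
    (hn : ∀ j, H 0 j = 1) (hc : ∀ i, H i 0 = 1)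
    (r : Fin (4*m)) (hr : r ≠ 0) (v : ℝ) (hv : v = 1 ∨ v = -1) :
    ∃ c, c ≠ 0 ∧ c ≠ r ∧ H r c = v := by
  by_contra hcon
  push_neg at hcon
  have hval : ∀ c, c ≠ 0 → c ≠ r → H r c = -v := by
    intro c h0 hrc
    rcases hent r c with h | h <;> rcases hv with rfl | rfl <;>
      first
        | (exact absurd h (hcon c h0 hrc))
        | (exact h)
        | (rw [h]; norm_num)
  have hsum : ∑ c, H r c = 0 := by
    have h2 := congrFun (congrFun horth r) 0
    rw [Matrix.mul_apply] at h2
    simp only [Matrix.transpose_apply, hn, mul_one, Matrix.smul_apply, Matrix.one_apply,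
      if_neg hr, smul_zero] at h2
    exact h2
  have h0r : (0 : Fin (4*m)) ≠ r := fun h => hr h.symm
  have hsplit : ∑ c ∈ (Finset.univ \ ({0, r} : Finset (Fin (4*m)))), H r c
      + ∑ c ∈ ({0, r} : Finset (Fin (4*m))), H r c = ∑ c, H r c :=
    Finset.sum_sdiff (Finset.subset_univ _)
  have hpair : ∑ c ∈ ({0, r} : Finset (Fin (4*m))), H r c = 1 + H r r := by
    rw [Finset.sum_pair h0r, hc r]
  have hconst : ∑ c ∈ (Finset.univ \ ({0, r} : Finset (Fin (4*m)))), H r c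
      = ((4*m - 2 : ℕ) : ℝ) * (-v) := by
    rw [Finset.sum_congr rfl (fun c hcmem => ?_), Finset.sum_const, nsmul_eq_mul]
    · congr 1
      norm_cast
      rw [Finset.card_sdiff_of_subset (Finset.subset_univ _)]
      simp [Finset.card_pair h0r]
    · simp only [Finset.mem_sdiff, Finset.mem_univ, Finset.mem_insert, Finset.mem_singleton,
        true_and] at hcmem
      push_neg at hcmem
      exact hval c hcmem.1 hcmem.2
  have hmr : (2:ℝ) ≤ (m:ℝ) := by exact_mod_cast hm
  have hcast : ((4*m - 2 : ℕ) : ℝ) = 4*(m:ℝ) - 2 := by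
    push_cast [Nat.cast_sub (by omega : 2 ≤ 4*m)]
    ring
  rw [hpair, hconst, hsum, hcast] at hsplit
  rcases hv with rfl | rfl <;> rcases hent r r with h | h <;> rw [h] at hsplit <;> nlinarith

lemma unit_cancel (u1 u2 u3 u4 x : ℂ) (h1 : u1 = 1) (h2 : u2 = 1) (h3 : u3 = 1) (h4 : u4 = 1) :
    u1 * u2 * u3 * u4 * x = x := by rw [h1, h2, h3, h4]; ring

end Aux

/-- Equivalence of complex Hadamard matrices: `H = P₁ D₁ K D₂ P₂` with permutation
matrices `P₁, P₂` and unitary diagonal matrices `D₁, D₂`. -/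
def HadEquiv {n : Type*} [Fintype n] [DecidableEq n] (H K : Matrix n n ℂ) : Prop :=
  ∃ (σ τ : Equiv.Perm n) (d₁ d₂ : n → ℂ),
    (∀ i, ‖d₁ i‖ = 1) ∧ (∀ i, ‖d₂ i‖ = 1) ∧
    H = σ.permMatrix ℂ * Matrix.diagonal d₁ * K * Matrix.diagonal d₂ * τ.permMatrix ℂ

/-- `B` is the incidence matrix (over `ℂ`, with `0`/`1` entries) of a symmetric
`2-(v,k,λ)` design. -/
def IsIncidence (v k lam : ℕ) (B : Matrix (Fin v) (Fin v) ℂ) : Prop :=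
  (∀ i j, B i j = 0 ∨ B i j = 1) ∧
    (∀ i, ∑ j, B i j = (k : ℂ)) ∧ (∀ j, ∑ i, B i j = (k : ℂ)) ∧
    B * B.transpose = ((k : ℂ) - (lam : ℂ)) • 1 + (lam : ℂ) • Matrix.of (fun _ _ => (1 : ℂ))

/-- `H` is a real Hadamard matrix of order `n`: `±1` entries with `H Hᵀ = n I`. -/
def IsRealHadamard {n : ℕ} (H : Matrix (Fin n) (Fin n) ℝ) : Prop :=
  (∀ i j, H i j = 1 ∨ H i j = -1) ∧ H * H.transpose = (n : ℝ) • 1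

/-- A real Hadamard matrix is normalized if its first row and column consist of `1`s. -/
def IsNormalizedRH {n : ℕ} [NeZero n] (H : Matrix (Fin n) (Fin n) ℝ) : Prop :=
  (∀ j, H 0 j = 1) ∧ (∀ i, H i 0 = 1)

set_option maxHeartbeats 1600000 in
theorem stmt11 (m : ℕ) (hm : 2 ≤ m)
    -- the design-based matrix U
    (B : Matrix (Fin (4 * m - 1)) (Fin (4 * m - 1)) ℂ)
    (hB : IsIncidence (4 * m - 1) (2 * m - 1) (m - 1) B)
    (ε : ℝ) (hε : ε = 1 ∨ ε = -1)
    (a : ℂ) (ha : a = -1 + 1 / (2 * m) + ε * Complex.I * Real.sqrt (4 * m - 1) / (2 * m))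
    (U : Matrix (Fin (4 * m - 1)) (Fin (4 * m - 1)) ℂ)
    (hU : U = Matrix.of fun i j => if B i j = 0 then a else B i j)
    -- the matrix V obtained from a normalized symmetric real Hadamard matrix H
    (H : Matrix (Fin (4 * m)) (Fin (4 * m)) ℝ)
    (hHad : IsRealHadamard H)
    (hnorm : @IsNormalizedRH (4 * m) ⟨by omega⟩ H)
    (hsym : H.transpose = H)
    (δ : ℝ) (hδ : δ = 1 ∨ δ = -1)
    (b : ℂ)
    (hb : b = -1 + 1 / (2 * m - 2) + δ * Complex.I * Real.sqrt (4 * m - 5) / (2 * m - 2))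
    (e : Fin (4 * m - 1) → Fin (4 * m))
    (he : ∀ i, e i = Fin.cast (by omega : 4 * m - 1 + 1 = 4 * m) i.succ)
    (V : Matrix (Fin (4 * m - 1)) (Fin (4 * m - 1)) ℂ)
    (hV : V = Matrix.of fun i j =>
      if i = j then (if H (e i) (e i) = 1 then -b else -1)
      else (if H (e i) (e j) = 1 then 1 else b)) :
    ¬ HadEquiv U V := by
  intro hE
  obtain ⟨σ, τ, d₁, d₂, hd₁, hd₂, heq⟩ := hE
  haveI : NeZero (4 * m) := ⟨by omega⟩
  have hM : (2:ℝ) ≤ (m:ℝ) := by exact_mod_cast hm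
  -- re/im facts about a
  have hkeya : a = ((-1 + 1/(2*(m:ℝ)) : ℝ) : ℂ)
      + (((ε * Real.sqrt (4*(m:ℝ)-1)/(2*(m:ℝ))) : ℝ) : ℂ) * Complex.I := by
    rw [ha]; push_cast; ring
  have hare : a.re = -1 + 1/(2*(m:ℝ)) := by
    rw [hkeya, Complex.add_re, Complex.ofReal_re, Complex.mul_I_re, Complex.ofReal_im,
      neg_zero, add_zero]
  have haim : a.im = ε * Real.sqrt (4*(m:ℝ)-1)/(2*(m:ℝ)) := by
    rw [hkeya, Complex.add_im, Complex.ofReal_im, Complex.mul_I_im, Complex.ofReal_re, zero_add]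
  have hia : a.im^2 = 1 - a.re^2 := by
    rw [haim, hare]
    have hs : Real.sqrt (4*(m:ℝ)-1)^2 = 4*(m:ℝ)-1 := Real.sq_sqrt (by linarith)
    have hε2 : ε^2 = 1 := by rcases hε with rfl | rfl <;> norm_num
    have hM0 : (2*(m:ℝ)) ≠ 0 := by positivity
    field_simp
    nlinarith [hs, hε2]
  -- re/im facts about b
  have hkeyb : b = ((-1 + 1/(2*(m:ℝ)-2) : ℝ) : ℂ)
      + (((δ * Real.sqrt (4*(m:ℝ)-5)/(2*(m:ℝ)-2)) : ℝ) : ℂ) * Complex.I := by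
    rw [hb]; push_cast; ring
  have hbre : b.re = -1 + 1/(2*(m:ℝ)-2) := by
    rw [hkeyb, Complex.add_re, Complex.ofReal_re, Complex.mul_I_re, Complex.ofReal_im,
      neg_zero, add_zero]
  have hbim : b.im = δ * Real.sqrt (4*(m:ℝ)-5)/(2*(m:ℝ)-2) := by
    rw [hkeyb, Complex.add_im, Complex.ofReal_im, Complex.mul_I_im, Complex.ofReal_re, zero_add]
  have hib : b.im^2 = 1 - b.re^2 := by
    rw [hbim, hbre]
    have hs : Real.sqrt (4*(m:ℝ)-5)^2 = 4*(m:ℝ)-5 := Real.sq_sqrt (by linarith)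
    have hδ2 : δ^2 = 1 := by rcases hδ with rfl | rfl <;> norm_num
    have hM0 : (2*(m:ℝ)-2) ≠ 0 := ne_of_gt (by linarith)
    rw [div_pow, mul_pow, hs, hδ2]
    have hM1 : (m:ℝ) - 1 ≠ 0 := ne_of_gt (by linarith)
    field_simp
    ring
  have hana : a * (starRingEnd ℂ) a = 1 := by
    have hn : Complex.normSq a = 1 := by rw [Complex.normSq_apply]; nlinarith [hia]
    rw [Complex.mul_conj, hn, Complex.ofReal_one]
  have hbb : b * (starRingEnd ℂ) b = 1 := by
    have hn : Complex.normSq b = 1 := by rw [Complex.normSq_apply]; nlinarith [hib]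
    rw [Complex.mul_conj, hn, Complex.ofReal_one]
  -- unit diagonal entries
  have hd₁' : ∀ i, d₁ i * (starRingEnd ℂ) (d₁ i) = 1 := by
    intro i
    have hn : Complex.normSq (d₁ i) = 1 := by
      rw [Complex.normSq_eq_norm_sq, hd₁ i]; norm_num
    rw [Complex.mul_conj, hn, Complex.ofReal_one]
  have hd₂' : ∀ i, d₂ i * (starRingEnd ℂ) (d₂ i) = 1 := by
    intro i
    have hn : Complex.normSq (d₂ i) = 1 := by
      rw [Complex.normSq_eq_norm_sq, hd₂ i]; norm_num
    rw [Complex.mul_conj, hn, Complex.ofReal_one]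
  -- U entries are 1 or a
  have hUm : ∀ i j, U i j = 1 ∨ U i j = a := by
    intro i j
    rw [hU]
    simp only [Matrix.of_apply]
    rcases hB.1 i j with h0 | h1
    · right; rw [if_pos h0]
    · left; rw [if_neg (by rw [h1]; norm_num), h1]
  -- the Haagerup-type invariance
  have hu : ∀ X Y, U (σ.symm X) (τ Y) = d₁ X * V X Y * d₂ Y := by
    intro X Y
    rw [heq, equiv_entry]
    simp
  have key : ∀ I J K L, V I J * (starRingEnd ℂ) (V K J) * V K L * (starRingEnd ℂ) (V I L)
      = U (σ.symm I) (τ J) * (starRingEnd ℂ) (U (σ.symm K) (τ J)) * U (σ.symm K) (τ L)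
        * (starRingEnd ℂ) (U (σ.symm I) (τ L)) := by
    intro I J K L
    rw [hu, hu, hu, hu]
    simp only [_root_.map_mul]
    conv_lhs => rw [← unit_cancel (d₁ I * (starRingEnd ℂ) (d₁ I)) (d₁ K * (starRingEnd ℂ) (d₁ K))
      (d₂ J * (starRingEnd ℂ) (d₂ J)) (d₂ L * (starRingEnd ℂ) (d₂ L))
      (V I J * (starRingEnd ℂ) (V K J) * V K L * (starRingEnd ℂ) (V I L))
      (hd₁' I) (hd₁' K) (hd₂' J) (hd₂' L)]
    ring
  -- facts about e
  have heval : ∀ i, (e i).val = i.val + 1 := by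
    intro i
    rw [he i]
    simp [Fin.coe_cast, Fin.val_succ]
  have he0 : ∀ i, e i ≠ 0 := by
    intro i h
    have : (e i).val = 0 := by rw [h]; simp
    rw [heval i] at this
    omega
  have hesurj : ∀ c : Fin (4*m), c ≠ 0 → ∃ k, e k = c := by
    intro c hc0
    have hcv : c.val ≠ 0 := by
      intro h; exact hc0 (Fin.ext (by simp [h]))
    refine ⟨⟨c.val - 1, by omega⟩, ?_⟩
    apply Fin.ext
    rw [heval]
    simp
    omega
  -- symmetry of H
  have hHs : ∀ x y, H x y = H y x := by
    intro x y
    exact (congrFun (congrFun hsym x) y).symm.trans (Matrix.transpose_apply H x y)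
  -- V entries
  have hVdiag1 : ∀ I, H (e I) (e I) = 1 → V I I = -b := by
    intro I h
    rw [hV]; simp only [Matrix.of_apply, if_true]; rw [if_pos h]
  have hVdiag2 : ∀ I, H (e I) (e I) = -1 → V I I = -1 := by
    intro I h
    rw [hV]; simp only [Matrix.of_apply]
    simp only [if_true]
    rw [if_neg (by rw [h]; norm_num : ¬ H (e I) (e I) = 1)]
  have hVoff1 : ∀ I K, I ≠ K → H (e I) (e K) = 1 → V I K = 1 := by
    intro I K hIK h
    rw [hV]; simp only [Matrix.of_apply]
    rw [if_neg hIK, if_pos h]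
  have hVoff2 : ∀ I K, I ≠ K → H (e I) (e K) = -1 → V I K = b := by
    intro I K hIK h
    rw [hV]; simp only [Matrix.of_apply]
    rw [if_neg hIK, if_neg (by rw [h]; norm_num)]
  -- the finishing move, given suitable I K and a z-form
  have finish : ∀ (I K : Fin (4*m-1)),
      (V I I * (starRingEnd ℂ) (V K I) * V K K * (starRingEnd ℂ) (V I K) = b
        ∨ V I I * (starRingEnd ℂ) (V K I) * V K K * (starRingEnd ℂ) (V I K) = (starRingEnd ℂ) b
        ∨ V I I * (starRingEnd ℂ) (V K I) * V K K * (starRingEnd ℂ) (V I K) = b^2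
        ∨ V I I * (starRingEnd ℂ) (V K I) * V K K * (starRingEnd ℂ) (V I K)
            = ((starRingEnd ℂ) b)^2) → False := by
    intro I K hz4
    have hzw := key I I K K
    have m1 := hUm (σ.symm I) (τ I)
    have m3 := hUm (σ.symm K) (τ K)
    have m2 : (starRingEnd ℂ) (U (σ.symm K) (τ I)) = 1
        ∨ (starRingEnd ℂ) (U (σ.symm K) (τ I)) = (starRingEnd ℂ) a := by
      rcases hUm (σ.symm K) (τ I) with h | h <;> rw [h] <;> simp
    have m4 : (starRingEnd ℂ) (U (σ.symm I) (τ K)) = 1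
        ∨ (starRingEnd ℂ) (U (σ.symm I) (τ K)) = (starRingEnd ℂ) a := by
      rcases hUm (σ.symm I) (τ K) with h | h <;> rw [h] <;> simp
    have hw5 := prod16 a hana _ _ _ _ m1 m2 m3 m4
    exact core20 (m:ℝ) hM a b _ _ hare hia hbre hib hz4 hw5 hzw
  -- main case analysis on the diagonal of the core of H
  by_cases hP : ∀ I : Fin (4*m-1), H (e I) (e I) = 1
  · -- all diagonal entries 1
    set I : Fin (4*m-1) := ⟨0, by omega⟩ with hIdef
    obtain ⟨c, hc0, hcr, hcv⟩ := row_has m hm H hHad.1 hHad.2 hnorm.1 hnorm.2 (e I) (he0 I) 1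
      (Or.inl rfl)
    obtain ⟨K, hK⟩ := hesurj c hc0
    have hIK : I ≠ K := by
      intro h
      exact hcr (by rw [← hK, h])
    have h1 : H (e I) (e K) = 1 := by rw [hK]; exact hcv
    apply finish I K
    right; right; left
    rw [hVdiag1 I (hP I), hVdiag1 K (hP K), hVoff1 I K hIK h1,
      hVoff1 K I (Ne.symm hIK) (by rw [hHs]; exact h1)]
    simp only [_root_.map_one]
    ring
  · by_cases hQ : ∀ I : Fin (4*m-1), H (e I) (e I) = -1
    · -- all diagonal entries -1
      set I : Fin (4*m-1) := ⟨0, by omega⟩ with hIdef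
      obtain ⟨c, hc0, hcr, hcv⟩ := row_has m hm H hHad.1 hHad.2 hnorm.1 hnorm.2 (e I) (he0 I)
        (-1) (Or.inr rfl)
      obtain ⟨K, hK⟩ := hesurj c hc0
      have hIK : I ≠ K := by
        intro h
        exact hcr (by rw [← hK, h])
      have h1 : H (e I) (e K) = -1 := by rw [hK]; exact hcv
      apply finish I K
      right; right; right
      rw [hVdiag2 I (hQ I), hVdiag2 K (hQ K), hVoff2 I K hIK h1,
        hVoff2 K I (Ne.symm hIK) (by rw [hHs]; exact h1)]
      ring
    · -- mixed diagonal
      push_neg at hP hQ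
      obtain ⟨K, hK⟩ := hP
      obtain ⟨I, hI⟩ := hQ
      have hKd : H (e K) (e K) = -1 := (hHad.1 _ _).resolve_left hK
      have hId : H (e I) (e I) = 1 := (hHad.1 _ _).resolve_right hI
      have hIK : I ≠ K := by
        intro h
        rw [h, hKd] at hId
        norm_num at hId
      apply finish I K
      by_cases hoff : H (e I) (e K) = 1
      · left
        rw [hVdiag1 I hId, hVdiag2 K hKd, hVoff1 I K hIK hoff,
          hVoff1 K I (Ne.symm hIK) (by rw [hHs]; exact hoff)]
        simp only [_root_.map_one]
        ring
      · right; left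
        have hoff' : H (e I) (e K) = -1 := (hHad.1 _ _).resolve_left hoff
        rw [hVdiag1 I hId, hVdiag2 K hKd, hVoff2 I K hIK hoff',
          hVoff2 K I (Ne.symm hIK) (by rw [hHs]; exact hoff')]
        have : -b * (starRingEnd ℂ) b * -1 * (starRingEnd ℂ) b
            = (b * (starRingEnd ℂ) b) * (starRingEnd ℂ) b := by ring
        rw [this, hbb, one_mul]
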